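/- Consider the binary symmetric wiretap channel with blocklength n and crossover probability p ∈ (0, 1/2): X = Y = Z = 𝔽₂ⁿ, the legitimate channel is noiseless (P_{Yⁿ|Xⁿ}(yⁿ|xⁿ) = 1{yⁿ = xⁿ}), and the eavesdropper's channel is the n-fold binary symmetric channel P_{Zⁿ|Xⁿ}(zⁿ|xⁿ) = p^{w}·(1−p)^{n−w} with w the Hamming distance between zⁿ and xⁿ. Then every (n, M, ε, δ)_avg secrecy code with ε < 1 satisfies g_n( 2ⁿ / (M·(1−ε)) ) ≤ δ/(1−ε). -/

import Mathlib

open Finset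
open scoped Classical

noncomputable section

lemma zmod2_eq_of_ne_iff (a b c : ZMod 2) (h : (a ≠ c) ↔ (b ≠ c)) : a = b := by
  revert h; revert a b c; decide

lemma zmod2_add_one_ne (a : ZMod 2) : a + 1 ≠ a := by revert a; decide

lemma sphere_card (n w : ℕ) (x : Fin n → ZMod 2) :
    (Finset.univ.filter (fun z : Fin n → ZMod 2 => hammingDist z x = w)).card
      = n.choose w := by
  rw [show n.choose w = (Finset.powersetCard w (Finset.univ : Finset (Fin n))).card by
    rw [Finset.card_powersetCard, Finset.card_univ, Fintype.card_fin]]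
  apply Finset.card_bij (fun z _ => Finset.univ.filter (fun i => z i ≠ x i))
  · intro z hz
    rw [Finset.mem_powersetCard]
    refine ⟨Finset.filter_subset _ _, ?_⟩
    simpa [hammingDist] using (Finset.mem_filter.mp hz).2
  · intro z1 h1 z2 h2 h
    funext i
    have := Finset.ext_iff.mp h i
    simp only [Finset.mem_filter, Finset.mem_univ, true_and] at this
    exact zmod2_eq_of_ne_iff _ _ _ this
  · intro s hs
    rw [Finset.mem_powersetCard] at hs
    refine ⟨fun i => if i ∈ s then x i + 1 else x i, ?_, ?_⟩
    · have hfe : Finset.univ.filter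
          (fun i => (if i ∈ s then x i + 1 else x i) ≠ x i) = s := by
        ext i
        simp only [Finset.mem_filter, Finset.mem_univ, true_and]
        by_cases h : i ∈ s <;> simp [h, zmod2_add_one_ne]
      simp only [Finset.mem_filter, Finset.mem_univ, true_and]
      show hammingDist _ x = w
      rw [show hammingDist (fun i => if i ∈ s then x i + 1 else x i) x
        = (Finset.univ.filter
          (fun i => (if i ∈ s then x i + 1 else x i) ≠ x i)).card from rfl, hfe]
      exact hs.2
    · ext i
      simp only [Finset.mem_filter, Finset.mem_univ, true_and]
      by_cases h : i ∈ s <;> simp [h, zmod2_add_one_ne]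

lemma sum_hamming (n : ℕ) (x : Fin n → ZMod 2) (f : ℕ → ℝ) :
    ∑ z : Fin n → ZMod 2, f (hammingDist z x)
      = ∑ w ∈ Finset.range (n + 1), (n.choose w : ℝ) * f w := by
  rw [← Finset.sum_fiberwise_of_maps_to (g := fun z => hammingDist z x)
    (t := Finset.range (n + 1))
    (fun z _ => Finset.mem_range.mpr (Nat.lt_succ_of_le
      (le_trans hammingDist_le_card_fintype (le_of_eq (Fintype.card_fin n)))))]
  refine Finset.sum_congr rfl (fun w _ => ?_)
  have : ∑ z ∈ Finset.univ.filter (fun z : Fin n → ZMod 2 => hammingDist z x = w),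
      f (hammingDist z x) = ∑ _z ∈ Finset.univ.filter
        (fun z : Fin n → ZMod 2 => hammingDist z x = w), f w :=
    Finset.sum_congr rfl (fun z hz => by rw [(Finset.mem_filter.mp hz).2])
  rw [this, Finset.sum_const, sphere_card, nsmul_eq_mul]

lemma min_add_le (x y B : ℝ) (hx : 0 ≤ x) (hy : 0 ≤ y) (hB : 0 ≤ B) :
    min (x + y) B ≤ min x B + min y B := by
  rcases le_total x B with h | h <;> rcases le_total y B with h' | h' <;>
    rcases le_total (x + y) B with h'' | h'' <;>
    simp [min_eq_left, min_eq_right, *] <;> linarith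

lemma min_sum_le {α : Type*} (s : Finset α) (a : α → ℝ) (B : ℝ)
    (hB : 0 ≤ B) (ha : ∀ i ∈ s, 0 ≤ a i) :
    min (∑ i ∈ s, a i) B ≤ ∑ i ∈ s, min (a i) B := by
  classical
  induction s using Finset.cons_induction with
  | empty => simp [hB]
  | cons j s hj ih =>
    rw [Finset.sum_cons, Finset.sum_cons]
    have h1 : 0 ≤ a j := ha j (Finset.mem_cons_self _ _)
    have h2 : 0 ≤ ∑ i ∈ s, a i :=
      Finset.sum_nonneg (fun i hi => ha i (Finset.mem_cons_of_mem hi))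
    calc min (a j + ∑ i ∈ s, a i) B ≤ min (a j) B + min (∑ i ∈ s, a i) B :=
          min_add_le _ _ _ h1 h2 hB
      _ ≤ min (a j) B + ∑ i ∈ s, min (a i) B := by
          gcongr
          exact ih (fun i hi => ha i (Finset.mem_cons_of_mem hi))

lemma max_sub_eq_sub_min (a b : ℝ) : max (a - b) 0 = a - min a b := by
  rcases le_total a b with h | h
  · rw [max_eq_right (sub_nonpos.mpr h), min_eq_left h, sub_self]
  · rw [max_eq_left (sub_nonneg.mpr h), min_eq_right h]

/-- Total variation distance between two finitely supported distributions. -/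
def tv {A : Type*} [Fintype A] (P Q : A → ℝ) : ℝ := (1 / 2) * ∑ a, |P a - Q a|

lemma tv_eq {A : Type*} [Fintype A] (P Q : A → ℝ) (h : ∑ a, P a = ∑ a, Q a) :
    tv P Q = ∑ a, max (P a - Q a) 0 := by
  unfold tv
  have : ∀ a, |P a - Q a| = 2 * max (P a - Q a) 0 - (P a - Q a) := by
    intro a
    rcases le_total (P a - Q a) 0 with h' | h'
    · rw [abs_of_nonpos h', max_eq_right h']; ring
    · rw [abs_of_nonneg h', max_eq_left h']; ring
  rw [Finset.sum_congr rfl (fun a _ => this a), Finset.sum_sub_distrib,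
    Finset.sum_sub_distrib, h, ← Finset.mul_sum]
  ring

/-- converse for the binary symmetric wiretap channel: the
legitimate channel is noiseless on `𝔽₂ⁿ` and the eavesdropper's channel is the
`n`-fold BSC with crossover probability `p ∈ (0, 1/2)`.  Every `(n, M, ε, δ)_avg`
secrecy code with `ε < 1` satisfies `g_n(2ⁿ/(M(1−ε))) ≤ δ/(1−ε)`. -/
theorem bsc_wiretap_converse
    (n : ℕ) (hn : 0 < n)
    (p : ℝ) (hp0 : 0 < p) (hp : p < 1 / 2)
    (PZX : (Fin n → ZMod 2) → (Fin n → ZMod 2) → ℝ)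
    (hPZX : ∀ x z, PZX x z =
      p ^ hammingDist z x * (1 - p) ^ (n - hammingDist z x))
    (gn : ℝ → ℝ)
    (hgn : ∀ γ, gn γ = 1 - ∑ w ∈ Finset.range (n + 1),
        (n.choose w : ℝ) * p ^ w * (1 - p) ^ (n - w) *
          Real.exp (-(max 0 ((w : ℝ) * Real.log (p / (1 - p))
            + (n : ℝ) * Real.log (1 - p) - Real.log (γ / 2 ^ n)))))
    (M : ℕ) (hM : 0 < M)
    (PW : Fin M → ℝ) (hPWpos : ∀ m, 0 ≤ PW m) (hPWsum : ∑ m, PW m = 1)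
    (enc : Fin M → (Fin n → ZMod 2) → ℝ)
    (hencpos : ∀ m x, 0 ≤ enc m x) (hencsum : ∀ m, ∑ x, enc m x = 1)
    (dec : (Fin n → ZMod 2) → Fin M)
    (ε δ : ℝ) (hε : ε < 1)
    -- average error probability over the noiseless legitimate channel
    (herr : ∑ m : Fin M, PW m *
        ∑ x ∈ univ.filter (fun x => dec x ≠ m), enc m x ≤ ε)
    -- average secrecy constraint `d(P_{WZⁿ}, Q^unif × P_{Zⁿ}) ≤ δ`
    (hsec : tv (fun q : Fin M × (Fin n → ZMod 2) =>
          PW q.1 * ∑ x, enc q.1 x * PZX x q.2)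
        (fun q : Fin M × (Fin n → ZMod 2) => (M : ℝ)⁻¹ *
          ∑ m : Fin M, PW m * ∑ x, enc m x * PZX x q.2) ≤ δ) :
    gn ((2 : ℝ) ^ n / ((M : ℝ) * (1 - ε))) ≤ δ / (1 - ε) := by
  classical
  have hp1 : 0 < 1 - p := by linarith
  have hε1 : 0 < 1 - ε := by linarith
  have hM0 : (0:ℝ) < (M:ℝ) := by exact_mod_cast hM
  have hMε : (0:ℝ) < (M:ℝ) * (1 - ε) := mul_pos hM0 hε1
  set t : ℝ := ((M:ℝ) * (1 - ε))⁻¹ with ht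
  have ht0 : 0 < t := inv_pos.mpr hMε
  have hq0 : ∀ w : ℕ, 0 < p ^ w * (1 - p) ^ (n - w) :=
    fun w => mul_pos (pow_pos hp0 w) (pow_pos hp1 _)
  have hPZXpos : ∀ x z, 0 ≤ PZX x z := fun x z => (hPZX x z) ▸ (hq0 _).le
  -- the binomial sums to one
  have hsumq : ∑ w ∈ Finset.range (n+1),
      (n.choose w : ℝ) * (p ^ w * (1 - p) ^ (n - w)) = 1 := by
    have h1 : ((p + (1 - p)) : ℝ) ^ n = 1 := by norm_num
    calc ∑ w ∈ Finset.range (n+1), (n.choose w : ℝ) * (p ^ w * (1 - p) ^ (n - w))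
        = ∑ w ∈ Finset.range (n+1), p ^ w * (1 - p) ^ (n - w) * (n.choose w : ℝ) :=
          Finset.sum_congr rfl fun w _ => by ring
      _ = ((p + (1 - p)) : ℝ) ^ n := (add_pow p (1 - p) n).symm
      _ = 1 := h1
  have hPZXsum : ∀ x, ∑ z, PZX x z = 1 := by
    intro x
    rw [Finset.sum_congr rfl (fun z _ => hPZX x z)]
    rw [sum_hamming n x (fun w => p ^ w * (1 - p) ^ (n - w))]
    exact hsumq
  -- single-message output sum
  have hWm : ∀ m : Fin M, ∑ z, PW m * ∑ x, enc m x * PZX x z = PW m := by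
    intro m
    rw [← Finset.mul_sum]
    have h2 : ∑ z, ∑ x, enc m x * PZX x z = 1 := by
      rw [Finset.sum_comm]
      rw [Finset.sum_congr rfl (fun x _ => by
        rw [← Finset.mul_sum, hPZXsum x, mul_one])]
      exact hencsum m
    rw [h2, mul_one]
  set PZ : (Fin n → ZMod 2) → ℝ :=
    fun z => ∑ m, PW m * ∑ x, enc m x * PZX x z with hPZdef
  have hPZpos : ∀ z, 0 ≤ PZ z := by
    intro z
    exact Finset.sum_nonneg fun m _ => mul_nonneg (hPWpos m)
      (Finset.sum_nonneg fun x _ => mul_nonneg (hencpos m x) (hPZXpos x z))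
  have hPZsum : ∑ z, PZ z = 1 := by
    rw [hPZdef, Finset.sum_comm, Finset.sum_congr rfl (fun m _ => hWm m), hPWsum]
  have hQ0 : ∀ z, 0 ≤ (M:ℝ)⁻¹ * PZ z :=
    fun z => mul_nonneg (inv_nonneg.mpr hM0.le) (hPZpos z)
  -- value of gn at γ
  have hγ : (2:ℝ)^n / ((M:ℝ)*(1-ε)) / 2^n = t := by
    rw [div_right_comm, div_self (by positivity : ((2:ℝ)^n) ≠ 0), one_div]
  have hgnval : gn ((2:ℝ)^n / ((M:ℝ)*(1-ε)))
      = ∑ w ∈ Finset.range (n+1), (n.choose w : ℝ)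
          * max (p ^ w * (1 - p) ^ (n - w) - t) 0 := by
    rw [hgn]
    have hterm : ∀ w ∈ Finset.range (n+1),
        (n.choose w : ℝ) * p ^ w * (1-p)^(n-w) *
          Real.exp (-(max 0 ((w:ℝ) * Real.log (p/(1-p)) + (n:ℝ) * Real.log (1-p)
            - Real.log ((2:ℝ)^n / ((M:ℝ)*(1-ε)) / 2^n))))
        = (n.choose w : ℝ) * min (p ^ w * (1 - p) ^ (n - w)) t := by
      intro w hw
      have hwn : w ≤ n := Nat.lt_succ_iff.mp (Finset.mem_range.mp hw)
      have hlog : (w:ℝ) * Real.log (p/(1-p)) + (n:ℝ) * Real.log (1-p)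
          - Real.log ((2:ℝ)^n / ((M:ℝ)*(1-ε)) / 2^n)
          = Real.log (p ^ w * (1 - p) ^ (n - w)) - Real.log t := by
        rw [hγ]
        have h1 : Real.log (p ^ w * (1 - p) ^ (n - w))
            = (w:ℝ) * Real.log p + ((n:ℝ) - (w:ℝ)) * Real.log (1-p) := by
          rw [Real.log_mul (pow_pos hp0 w).ne' (pow_pos hp1 _).ne',
            Real.log_pow, Real.log_pow, ← Nat.cast_sub hwn]
        rw [h1, Real.log_div hp0.ne' hp1.ne']
        ring
      rw [hlog]
      rcases le_total (p ^ w * (1 - p) ^ (n - w)) t with h | h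
      · rw [max_eq_left (sub_nonpos.mpr
            ((Real.log_le_log_iff (hq0 w) ht0).mpr h)),
          neg_zero, Real.exp_zero, min_eq_left h, mul_one, mul_assoc]
      · rw [max_eq_right (sub_nonneg.mpr
            ((Real.log_le_log_iff ht0 (hq0 w)).mpr h)),
          min_eq_right h, neg_sub, Real.exp_sub, Real.exp_log ht0,
          Real.exp_log (hq0 w)]
        have hz1 : (p : ℝ) ^ w ≠ 0 := (pow_pos hp0 w).ne'
        have hz2 : ((1 - p) : ℝ) ^ (n - w) ≠ 0 := (pow_pos hp1 _).ne'
        field_simp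
    rw [Finset.sum_congr rfl hterm]
    have hrhs : ∑ w ∈ Finset.range (n+1), (n.choose w : ℝ)
          * max (p ^ w * (1 - p) ^ (n - w) - t) 0
        = (∑ w ∈ Finset.range (n+1), (n.choose w : ℝ) * (p ^ w * (1 - p) ^ (n - w)))
          - ∑ w ∈ Finset.range (n+1), (n.choose w : ℝ)
              * min (p ^ w * (1 - p) ^ (n - w)) t := by
      rw [← Finset.sum_sub_distrib]
      exact Finset.sum_congr rfl fun w _ => by rw [← mul_sub, max_sub_eq_sub_min]
    rw [hrhs, hsumq]
  -- the correctly-decoded sub-distribution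
  set ν : (Fin n → ZMod 2) → ℝ := fun x => PW (dec x) * enc (dec x) x with hν
  have hν0 : ∀ x, 0 ≤ ν x := fun x => mul_nonneg (hPWpos _) (hencpos _ _)
  set S : ℝ := ∑ x, ν x with hS
  have hfib : ∀ (f : (Fin n → ZMod 2) → ℝ),
      ∑ m, ∑ x ∈ univ.filter (fun x => dec x = m), f x = ∑ x, f x :=
    fun f => Finset.sum_fiberwise_of_maps_to (fun x _ => Finset.mem_univ _) f
  have hSerr : 1 - ε ≤ S := by
    have h1 : S = ∑ m, ∑ x ∈ univ.filter (fun x => dec x = m), PW m * enc m x := by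
      rw [hS, ← hfib ν]
      exact Finset.sum_congr rfl fun m _ => Finset.sum_congr rfl fun x hx => by
        rw [hν]
        simp only
        rw [(Finset.mem_filter.mp hx).2]
    have h2 : ∀ m : Fin M, ∑ x ∈ univ.filter (fun x => dec x = m), PW m * enc m x
        = PW m - PW m * ∑ x ∈ univ.filter (fun x => dec x ≠ m), enc m x := by
      intro m
      have h3 := Finset.sum_filter_add_sum_filter_not univ (fun x => dec x = m) (enc m)
      rw [hencsum m] at h3
      rw [← Finset.mul_sum]
      have h4 : ∑ x ∈ univ.filter (fun x => dec x = m), enc m x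
          = 1 - ∑ x ∈ univ.filter (fun x => dec x ≠ m), enc m x := by
        have : (univ.filter (fun x => ¬ dec x = m)) = univ.filter (fun x => dec x ≠ m) := rfl
        linarith [h3, this ▸ h3]
      rw [h4]; ring
    rw [h1, Finset.sum_congr rfl (fun m _ => h2 m), Finset.sum_sub_distrib, hPWsum]
    linarith [herr]
  -- total masses
  have hPsum : ∑ mz : Fin M × (Fin n → ZMod 2),
      PW mz.1 * ∑ x, enc mz.1 x * PZX x mz.2 = 1 := by
    rw [Fintype.sum_prod_type]
    rw [Finset.sum_congr rfl (fun m _ => hWm m)]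
    exact hPWsum
  have hQsum : ∑ mz : Fin M × (Fin n → ZMod 2), (M:ℝ)⁻¹ * PZ mz.2 = 1 := by
    rw [Fintype.sum_prod_type]
    rw [Finset.sum_congr rfl (fun m (_ : m ∈ univ) => by
      rw [← Finset.mul_sum, hPZsum, mul_one])]
    rw [Finset.sum_const, Finset.card_univ, Fintype.card_fin, nsmul_eq_mul,
      mul_inv_cancel₀ hM0.ne']
  set μ : Fin M → (Fin n → ZMod 2) → ℝ := fun m z =>
    ∑ x ∈ univ.filter (fun x => dec x = m), PW m * enc m x * PZX x z with hμ
  have hμle : ∀ m z, μ m z ≤ PW m * ∑ x, enc m x * PZX x z := by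
    intro m z
    rw [Finset.mul_sum]
    calc μ m z ≤ ∑ x, PW m * (enc m x * PZX x z) := by
          rw [hμ]
          simp only
          rw [Finset.sum_congr rfl (fun x _ => mul_assoc (PW m) (enc m x) (PZX x z))]
          exact Finset.sum_le_sum_of_subset_of_nonneg (Finset.filter_subset _ _)
            (fun x _ _ => mul_nonneg (hPWpos m)
              (mul_nonneg (hencpos m x) (hPZXpos x z)))
      _ = _ := rfl
  -- δ lower bound via TV
  have hδ1 : ∑ m, ∑ z, max (μ m z - (M:ℝ)⁻¹ * PZ z) 0 ≤ δ := by
    refine le_trans ?_ hsec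
    rw [tv_eq _ _ (by rw [hPsum, hQsum]), Fintype.sum_prod_type]
    exact Finset.sum_le_sum fun m _ => Finset.sum_le_sum fun z _ =>
      max_le_max (sub_le_sub_right (hμle m z) _) le_rfl
  have hμsum : ∑ m, ∑ z, μ m z = S := by
    have h1 : ∀ m : Fin M, ∑ z, μ m z
        = ∑ x ∈ univ.filter (fun x => dec x = m), ν x := by
      intro m
      rw [hμ]
      simp only
      rw [Finset.sum_comm]
      refine Finset.sum_congr rfl fun x hx => ?_
      rw [← Finset.mul_sum, hPZXsum x, mul_one, hν]
      simp only
      rw [(Finset.mem_filter.mp hx).2]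
    rw [Finset.sum_congr rfl (fun m _ => h1 m), hfib, hS]
  have hδ2 : S - ∑ m, ∑ z, min (μ m z) ((M:ℝ)⁻¹ * PZ z) ≤ δ := by
    have h1 : ∑ m, ∑ z, max (μ m z - (M:ℝ)⁻¹ * PZ z) 0
        = S - ∑ m, ∑ z, min (μ m z) ((M:ℝ)⁻¹ * PZ z) := by
      rw [← hμsum, ← Finset.sum_sub_distrib]
      refine Finset.sum_congr rfl fun m _ => ?_
      rw [← Finset.sum_sub_distrib]
      exact Finset.sum_congr rfl fun z _ => max_sub_eq_sub_min _ _
    linarith [hδ1, h1 ▸ hδ1]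
  -- bounding the min-sum
  have hminb : ∑ m, ∑ z, min (μ m z) ((M:ℝ)⁻¹ * PZ z)
      ≤ ∑ w ∈ Finset.range (n+1), (n.choose w : ℝ)
          * min (S * (p ^ w * (1 - p) ^ (n - w))) (M:ℝ)⁻¹ := by
    have step1 : ∑ m, ∑ z, min (μ m z) ((M:ℝ)⁻¹ * PZ z)
        ≤ ∑ z, ∑ x, min (ν x * PZX x z) ((M:ℝ)⁻¹ * PZ z) := by
      rw [Finset.sum_comm]
      refine Finset.sum_le_sum fun z _ => ?_
      calc ∑ m, min (μ m z) ((M:ℝ)⁻¹ * PZ z)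
          ≤ ∑ m, ∑ x ∈ univ.filter (fun x => dec x = m),
              min (PW m * enc m x * PZX x z) ((M:ℝ)⁻¹ * PZ z) := by
            refine Finset.sum_le_sum fun m _ => ?_
            rw [hμ]
            exact min_sum_le _ _ _ (hQ0 z) (fun x _ => mul_nonneg
              (mul_nonneg (hPWpos m) (hencpos m x)) (hPZXpos x z))
        _ = ∑ m, ∑ x ∈ univ.filter (fun x => dec x = m),
              min (ν x * PZX x z) ((M:ℝ)⁻¹ * PZ z) := by
            refine Finset.sum_congr rfl fun m _ => Finset.sum_congr rfl fun x hx => ?_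
            rw [hν]
            simp only
            rw [(Finset.mem_filter.mp hx).2]
        _ = ∑ x, min (ν x * PZX x z) ((M:ℝ)⁻¹ * PZ z) := hfib _
    have step2 : ∑ z, ∑ x, min (ν x * PZX x z) ((M:ℝ)⁻¹ * PZ z)
        = ∑ u, ∑ x, min (ν x * (p ^ hammingNorm u * (1 - p) ^ (n - hammingNorm u)))
            ((M:ℝ)⁻¹ * PZ (u + x)) := by
      calc ∑ z, ∑ x, min (ν x * PZX x z) ((M:ℝ)⁻¹ * PZ z)
          = ∑ x, ∑ z, min (ν x * PZX x z) ((M:ℝ)⁻¹ * PZ z) := Finset.sum_comm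
        _ = ∑ x, ∑ u, min (ν x * (p ^ hammingNorm u * (1 - p) ^ (n - hammingNorm u)))
              ((M:ℝ)⁻¹ * PZ (u + x)) := by
            refine Finset.sum_congr rfl fun x _ => ?_
            have h5 : ∑ u : Fin n → ZMod 2,
                min (ν x * PZX x (u + x)) ((M:ℝ)⁻¹ * PZ (u + x))
                = ∑ z, min (ν x * PZX x z) ((M:ℝ)⁻¹ * PZ z) :=
              Equiv.sum_comp (Equiv.addRight x)
                (fun z => min (ν x * PZX x z) ((M:ℝ)⁻¹ * PZ z))
            rw [← h5]
            refine Finset.sum_congr rfl fun u _ => ?_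
            have hd : hammingDist (u + x) x = hammingNorm u := by
              rw [hammingDist_comm, hammingDist_eq_hammingNorm]
              congr 1
              abel
            rw [hPZX, hd]
        _ = ∑ u, ∑ x, min (ν x * (p ^ hammingNorm u * (1 - p) ^ (n - hammingNorm u)))
              ((M:ℝ)⁻¹ * PZ (u + x)) := Finset.sum_comm
    have step3 : ∀ u : Fin n → ZMod 2,
        ∑ x, min (ν x * (p ^ hammingNorm u * (1 - p) ^ (n - hammingNorm u)))
            ((M:ℝ)⁻¹ * PZ (u + x))
        ≤ min (S * (p ^ hammingNorm u * (1 - p) ^ (n - hammingNorm u))) (M:ℝ)⁻¹ := by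
      intro u
      refine le_min ?_ ?_
      · calc _ ≤ ∑ x, ν x * (p ^ hammingNorm u * (1 - p) ^ (n - hammingNorm u)) :=
              Finset.sum_le_sum fun x _ => min_le_left _ _
          _ = S * (p ^ hammingNorm u * (1 - p) ^ (n - hammingNorm u)) := by
              rw [hS, Finset.sum_mul]
      · calc _ ≤ ∑ x, (M:ℝ)⁻¹ * PZ (u + x) :=
              Finset.sum_le_sum fun x _ => min_le_right _ _
          _ = (M:ℝ)⁻¹ := by
              have h5 : ∑ x : Fin n → ZMod 2, PZ (u + x) = ∑ z, PZ z :=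
                Equiv.sum_comp (Equiv.addLeft u) PZ
              rw [← Finset.mul_sum, h5, hPZsum, mul_one]
    have step4 : ∑ u : Fin n → ZMod 2,
        min (S * (p ^ hammingNorm u * (1 - p) ^ (n - hammingNorm u))) (M:ℝ)⁻¹
        = ∑ w ∈ Finset.range (n+1), (n.choose w : ℝ)
            * min (S * (p ^ w * (1 - p) ^ (n - w))) (M:ℝ)⁻¹ := by
      rw [← sum_hamming n 0 (fun w => min (S * (p ^ w * (1 - p) ^ (n - w))) (M:ℝ)⁻¹)]
      exact Finset.sum_congr rfl fun u _ => by rw [hammingDist_zero_right]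
    calc ∑ m, ∑ z, min (μ m z) ((M:ℝ)⁻¹ * PZ z)
        ≤ ∑ z, ∑ x, min (ν x * PZX x z) ((M:ℝ)⁻¹ * PZ z) := step1
      _ = ∑ u, ∑ x, min (ν x * (p ^ hammingNorm u * (1 - p) ^ (n - hammingNorm u)))
            ((M:ℝ)⁻¹ * PZ (u + x)) := step2
      _ ≤ ∑ u : Fin n → ZMod 2,
            min (S * (p ^ hammingNorm u * (1 - p) ^ (n - hammingNorm u))) (M:ℝ)⁻¹ :=
          Finset.sum_le_sum fun u _ => step3 u
      _ = _ := step4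
  -- final assembly
  have htM : (1 - ε) * t = (M:ℝ)⁻¹ := by
    rw [ht, mul_inv]
    field_simp
  have hSq : ∑ w ∈ Finset.range (n+1),
      (n.choose w : ℝ) * (S * (p ^ w * (1 - p) ^ (n - w))) = S := by
    rw [Finset.sum_congr rfl (fun w (_ : w ∈ Finset.range (n+1)) =>
      mul_left_comm (n.choose w : ℝ) S (p ^ w * (1 - p) ^ (n - w))),
      ← Finset.mul_sum, hsumq, mul_one]
  have hfinal : (1 - ε) * ∑ w ∈ Finset.range (n+1), (n.choose w : ℝ)
      * max (p ^ w * (1 - p) ^ (n - w) - t) 0 ≤ δ := by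
    have h1 : (1 - ε) * ∑ w ∈ Finset.range (n+1), (n.choose w : ℝ)
        * max (p ^ w * (1 - p) ^ (n - w) - t) 0
        = ∑ w ∈ Finset.range (n+1), (n.choose w : ℝ)
            * max ((1 - ε) * (p ^ w * (1 - p) ^ (n - w)) - (M:ℝ)⁻¹) 0 := by
      rw [Finset.mul_sum]
      refine Finset.sum_congr rfl fun w _ => ?_
      rw [mul_left_comm, mul_max_of_nonneg _ _ hε1.le, mul_zero, mul_sub, htM]
    have h2 : ∑ w ∈ Finset.range (n+1), (n.choose w : ℝ)
          * max ((1 - ε) * (p ^ w * (1 - p) ^ (n - w)) - (M:ℝ)⁻¹) 0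
        ≤ ∑ w ∈ Finset.range (n+1), (n.choose w : ℝ)
          * max (S * (p ^ w * (1 - p) ^ (n - w)) - (M:ℝ)⁻¹) 0 := by
      refine Finset.sum_le_sum fun w _ => mul_le_mul_of_nonneg_left
        (max_le_max (sub_le_sub_right
          (mul_le_mul_of_nonneg_right hSerr (hq0 w).le) _) le_rfl)
        (Nat.cast_nonneg _)
    have h3 : ∑ w ∈ Finset.range (n+1), (n.choose w : ℝ)
          * max (S * (p ^ w * (1 - p) ^ (n - w)) - (M:ℝ)⁻¹) 0
        = (∑ w ∈ Finset.range (n+1), (n.choose w : ℝ)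
              * (S * (p ^ w * (1 - p) ^ (n - w))))
          - ∑ w ∈ Finset.range (n+1), (n.choose w : ℝ)
            * min (S * (p ^ w * (1 - p) ^ (n - w))) (M:ℝ)⁻¹ := by
      rw [← Finset.sum_sub_distrib]
      exact Finset.sum_congr rfl fun w _ => by rw [← mul_sub, max_sub_eq_sub_min]
    rw [hSq] at h3
    have h4 : S - ∑ w ∈ Finset.range (n+1), (n.choose w : ℝ)
        * min (S * (p ^ w * (1 - p) ^ (n - w))) (M:ℝ)⁻¹ ≤ δ := by
      linarith [hminb, hδ2]
    calc (1 - ε) * ∑ w ∈ Finset.range (n+1), (n.choose w : ℝ)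
          * max (p ^ w * (1 - p) ^ (n - w) - t) 0
        = ∑ w ∈ Finset.range (n+1), (n.choose w : ℝ)
            * max ((1 - ε) * (p ^ w * (1 - p) ^ (n - w)) - (M:ℝ)⁻¹) 0 := h1
      _ ≤ ∑ w ∈ Finset.range (n+1), (n.choose w : ℝ)
            * max (S * (p ^ w * (1 - p) ^ (n - w)) - (M:ℝ)⁻¹) 0 := h2
      _ = S - ∑ w ∈ Finset.range (n+1), (n.choose w : ℝ)
            * min (S * (p ^ w * (1 - p) ^ (n - w))) (M:ℝ)⁻¹ := h3
      _ ≤ δ := h4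
  rw [hgnval, le_div_iff₀ hε1, mul_comm]
  exact hfinal
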